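/- Define the Barbasch-Vogan duality on partitions of type D by d_BV(p) = (p*)_D, the D-collapse of the transpose. Then for any partition p of 2n of type D, d_BV(p) is again a partition of 2n of type D, and d_BV is order-reversing: if p ≥ q in the dominance order (both of type D), then d_BV(p) ≤ d_BV(q). -/
import Mathlib


/-- `p` is a partition of `n`: the parts `p 0 ≥ p 1 ≥ ...` are non-increasing,
eventually zero, and sum to `n` (trailing zero padding). -/
def PartitionOf (n : ℕ) (p : ℕ → ℕ) : Prop :=
  Antitone p ∧ ∃ N, (∀ i, N ≤ i → p i = 0) ∧ ∑ i ∈ Finset.range N, p i = n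

/-- Sum of the first `t` parts. -/
def psum (p : ℕ → ℕ) (t : ℕ) : ℕ := ∑ i ∈ Finset.range t, p i

/-- Dominance order: every partial sum of `p` is at least that of `q`. -/
def Dominates (p q : ℕ → ℕ) : Prop := ∀ t, psum q t ≤ psum p t

/-- Transpose (conjugate) partition: `transpose p i = #{j : p j ≥ i + 1}` (0-indexed). -/
noncomputable def transpose (p : ℕ → ℕ) (i : ℕ) : ℕ := Set.ncard {j | i < p j}

/-- Multiplicity of the part `m` in `p`. -/
noncomputable def partMult (p : ℕ → ℕ) (m : ℕ) : ℕ := Set.ncard {i | p i = m}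

/-- Type B (and type D) condition: every (positive) even part occurs with even multiplicity. -/
def TypeBseq (p : ℕ → ℕ) : Prop := ∀ m, 0 < m → Even m → Even (partMult p m)

/-- Type C condition: every odd part occurs with even multiplicity. -/
def TypeCseq (p : ℕ → ℕ) : Prop := ∀ m, 0 < m → Odd m → Even (partMult p m)

/-- Number of (nonzero) parts of `p`: least index after which `p` vanishes. -/
noncomputable def plen (p : ℕ → ℕ) : ℕ := sInf {N | ∀ i, N ≤ i → p i = 0}

/-- `p⁻`: subtract 1 from the smallest (last nonzero) part. -/
noncomputable def pminus (p : ℕ → ℕ) : ℕ → ℕ := fun i => if i + 1 = plen p then p i - 1 else p i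

/-- `p⁺`: add 1 to the largest part. -/
def pplus (p : ℕ → ℕ) : ℕ → ℕ := fun i => if i = 0 then p i + 1 else p i

/-- Type D condition on parts is the same as type B: even parts occur with even multiplicity. -/
def TypeDseq (p : ℕ → ℕ) : Prop := ∀ m, 0 < m → Even m → Even (partMult p m)

open Finset in
lemma psum_transpose_eq (p : ℕ → ℕ) (N : ℕ) (hN : ∀ i, N ≤ i → p i = 0) (t : ℕ) :
    psum (transpose p) t = ∑ j ∈ Finset.range N, min (p j) t := by
  have hset : ∀ i, {j | i < p j} = ((Finset.range N).filter (fun j => i < p j) : Finset ℕ) := by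
    intro i
    ext j
    simp only [Set.mem_setOf_eq, Finset.coe_filter, Finset.mem_range]
    constructor
    · intro h
      refine ⟨?_, h⟩
      by_contra hj
      push_neg at hj
      have := hN j hj
      omega
    · exact fun h => h.2
  have h1 : ∀ i, transpose p i = ((Finset.range N).filter (fun j => i < p j)).card := by
    intro i
    rw [transpose, hset i, Set.ncard_coe_finset]
  unfold psum
  calc ∑ i ∈ Finset.range t, transpose p i
      = ∑ i ∈ Finset.range t, ∑ j ∈ Finset.range N, (if i < p j then 1 else 0) := by
        refine Finset.sum_congr rfl fun i _ => ?_
        rw [h1 i, Finset.card_filter]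
    _ = ∑ j ∈ Finset.range N, ∑ i ∈ Finset.range t, (if i < p j then 1 else 0) :=
        Finset.sum_comm
    _ = ∑ j ∈ Finset.range N, min (p j) t := by
        refine Finset.sum_congr rfl fun j _ => ?_
        rw [← Finset.card_filter]
        have : (Finset.range t).filter (fun i => i < p j) = Finset.range (min (p j) t) := by
          ext i
          simp [lt_min_iff, and_comm]
        rw [this, Finset.card_range]

lemma sum_tsub_le_sum_tsub (p q : ℕ → ℕ) (hq : Antitone q) (N : ℕ)
    (hqN : ∀ i, N ≤ i → q i = 0) (hdom : ∀ k, psum q k ≤ psum p k) (t : ℕ) :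
    ∑ j ∈ Finset.range N, (q j - t) ≤ ∑ j ∈ Finset.range N, (p j - t) := by
  -- let m be minimal with q m ≤ t
  have hne : {j | q j ≤ t}.Nonempty := ⟨N, by simp [hqN N le_rfl]⟩
  set m := sInf {j | q j ≤ t} with hm
  have hmem : q m ≤ t := csInf_mem hne
  have hlt : ∀ j, j < m → t < q j := by
    intro j hj
    by_contra h
    push_neg at h
    have : m ≤ j := Nat.sInf_le (show j ∈ {j | q j ≤ t} from h)
    omega
  have hmN : m ≤ N := Nat.sInf_le (by simp [hqN N le_rfl])
  have h1 : ∑ j ∈ Finset.range N, (q j - t) = ∑ j ∈ Finset.range m, (q j - t) := by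
    rw [← Finset.sum_range_add_sum_Ico _ hmN]
    have : ∑ j ∈ Finset.Ico m N, (q j - t) = 0 := by
      apply Finset.sum_eq_zero
      intro j hj
      have : q j ≤ q m := hq (Finset.mem_Ico.mp hj).1
      omega
    omega
  have h2 : ∑ j ∈ Finset.range m, (q j - t) + m * t = psum q m := by
    unfold psum
    rw [show m * t = ∑ _j ∈ Finset.range m, t by simp [mul_comm], ← Finset.sum_add_distrib]
    refine Finset.sum_congr rfl fun j hj => ?_
    have := hlt j (Finset.mem_range.mp hj)
    omega
  have h3 : psum p m - m * t ≤ ∑ j ∈ Finset.range m, (p j - t) := by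
    unfold psum
    have : ∑ j ∈ Finset.range m, p j ≤ ∑ j ∈ Finset.range m, ((p j - t) + t) :=
      Finset.sum_le_sum fun j _ => by omega
    rw [Finset.sum_add_distrib, Finset.sum_const, Finset.card_range, smul_eq_mul] at this
    omega
  have h4 : ∑ j ∈ Finset.range m, (p j - t) ≤ ∑ j ∈ Finset.range N, (p j - t) :=
    Finset.sum_le_sum_of_subset (Finset.range_subset_range.mpr hmN)
  have h5 := hdom m
  omega

/-- If `p` dominates `q` (both partitions of the same `n`) then the transpose of `q`
dominates the transpose of `p`. -/
lemma transpose_antitone (n : ℕ) (p q : ℕ → ℕ)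
    (hp : PartitionOf n p) (hq : PartitionOf n q) (hdom : Dominates p q) :
    Dominates (transpose q) (transpose p) := by
  obtain ⟨hpa, Np, hNp, hsp⟩ := hp
  obtain ⟨hqa, Nq, hNq, hsq⟩ := hq
  set N := max Np Nq with hN
  have hpN : ∀ i, N ≤ i → p i = 0 := fun i hi => hNp i (le_trans (le_max_left _ _) hi)
  have hqN : ∀ i, N ≤ i → q i = 0 := fun i hi => hNq i (le_trans (le_max_right _ _) hi)
  have hsp' : ∑ i ∈ Finset.range N, p i = n := by
    rw [← hsp]
    exact (Finset.sum_subset (Finset.range_subset_range.mpr (le_max_left Np Nq))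
      (fun i _ hi => hNp i (by simpa using hi))).symm
  have hsq' : ∑ i ∈ Finset.range N, q i = n := by
    rw [← hsq]
    exact (Finset.sum_subset (Finset.range_subset_range.mpr (le_max_right Np Nq))
      (fun i _ hi => hNq i (by simpa using hi))).symm
  intro t
  rw [psum_transpose_eq p N hpN t, psum_transpose_eq q N hqN t]
  have hkey : ∑ j ∈ Finset.range N, (q j - t) ≤ ∑ j ∈ Finset.range N, (p j - t) :=
    sum_tsub_le_sum_tsub p q hqa N hqN hdom t
  have hminp : ∀ j, min (p j) t = p j - (p j - t) := fun j => by omega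
  have hminq : ∀ j, min (q j) t = q j - (q j - t) := fun j => by omega
  simp only [hminp, hminq]
  have e1 : ∑ j ∈ Finset.range N, (p j - (p j - t))
      = ∑ j ∈ Finset.range N, p j - ∑ j ∈ Finset.range N, (p j - t) := by
    rw [eq_tsub_iff_add_eq_of_le, ← Finset.sum_add_distrib]
    · exact Finset.sum_congr rfl fun j _ => by omega
    · exact Finset.sum_le_sum fun j _ => by omega
  have e2 : ∑ j ∈ Finset.range N, (q j - (q j - t))
      = ∑ j ∈ Finset.range N, q j - ∑ j ∈ Finset.range N, (q j - t) := by
    rw [eq_tsub_iff_add_eq_of_le, ← Finset.sum_add_distrib]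
    · exact Finset.sum_congr rfl fun j _ => by omega
    · exact Finset.sum_le_sum fun j _ => by omega
  have hle : ∑ j ∈ Finset.range N, (q j - t) ≤ n := by
    rw [← hsq']; exact Finset.sum_le_sum fun j _ => by omega
  rw [e1, e2, hsp', hsq']
  omega

/-- for a type D partition `p` of `2n`, the Barbasch-Vogan dual
`d_BV(p) = (p*)_D` (D-collapse of the transpose) is a type D partition of `2n`; moreover
`d_BV` is order-reversing: if `p ≥ q` (both type D partitions of `2n`) then
`d_BV(p) ≤ d_BV(q)`. Here `cp` (resp. `cq`) is the D-collapse of `p*` (resp. `q*`):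
the unique maximal type D partition of `2n` dominated by the transpose. -/
theorem stmt_12 (n : ℕ) (p q : ℕ → ℕ)
    (hp : PartitionOf (2 * n) p) (hpD : TypeDseq p)
    (hq : PartitionOf (2 * n) q) (hqD : TypeDseq q)
    (hdom : Dominates p q)
    (cp cq : ℕ → ℕ)
    (hcp : PartitionOf (2 * n) cp ∧ TypeDseq cp ∧ Dominates (transpose p) cp ∧
      ∀ c', PartitionOf (2 * n) c' → TypeDseq c' → Dominates (transpose p) c' → Dominates cp c')
    (hcq : PartitionOf (2 * n) cq ∧ TypeDseq cq ∧ Dominates (transpose q) cq ∧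
      ∀ c', PartitionOf (2 * n) c' → TypeDseq c' → Dominates (transpose q) c' → Dominates cq c') :
    (PartitionOf (2 * n) cp ∧ TypeDseq cp) ∧ Dominates cq cp := by
  obtain ⟨hcp1, hcp2, hcp3, _⟩ := hcp
  obtain ⟨_, _, _, hcq4⟩ := hcq
  refine ⟨⟨hcp1, hcp2⟩, ?_⟩
  have htrans : Dominates (transpose q) (transpose p) :=
    transpose_antitone (2 * n) p q hp hq hdom
  exact hcq4 cp hcp1 hcp2 (fun t => le_trans (hcp3 t) (htrans t))
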